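/- For every integer N ≥ 1 and every real x with 0 < x < π/2, one has sin²x ≥ sin(π/N)·sin(Nx²/π). -/

import Mathlib

open Real

/-- `sin` is multiplicatively log-concave on `(0, π)`:
`u ↦ log (sin (exp u))` is concave on `Iio (log π)`. -/
lemma concave_log_sin_exp :
    ConcaveOn ℝ (Set.Iio (Real.log Real.pi))
      (fun u => Real.log (Real.sin (Real.exp u))) := by
  have hint : interior (Set.Iio (Real.log Real.pi)) = Set.Iio (Real.log Real.pi) :=
    isOpen_Iio.interior_eq
  have hmem : ∀ u ∈ Set.Iio (Real.log Real.pi),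
      0 < Real.sin (Real.exp u) := by
    intro u hu
    apply Real.sin_pos_of_pos_of_lt_pi (Real.exp_pos u)
    have := Set.mem_Iio.1 hu
    calc Real.exp u < Real.exp (Real.log Real.pi) := Real.exp_lt_exp.2 this
      _ = Real.pi := Real.exp_log Real.pi_pos
  apply concaveOn_of_hasDerivWithinAt2_nonpos (f' := fun u =>
      Real.exp u * Real.cos (Real.exp u) / Real.sin (Real.exp u))
    (f'' := fun u => Real.exp u * (Real.sin (Real.exp u) * Real.cos (Real.exp u) - Real.exp u) /
      (Real.sin (Real.exp u)) ^ 2)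
    (convex_Iio _)
  · -- continuity
    intro u hu
    have h1 := hmem u hu
    exact ((Real.continuous_sin.comp Real.continuous_exp).continuousWithinAt.log h1.ne')
  · intro u hu
    rw [hint] at hu
    have hs := hmem u hu
    have h1 : HasDerivAt (fun u => Real.sin (Real.exp u))
        (Real.cos (Real.exp u) * Real.exp u) u :=
      (Real.hasDerivAt_sin (Real.exp u)).comp u (Real.hasDerivAt_exp u)
    have h2 : HasDerivAt (fun u => Real.log (Real.sin (Real.exp u)))
        ((Real.sin (Real.exp u))⁻¹ * (Real.cos (Real.exp u) * Real.exp u)) u :=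
      by have := (Real.hasDerivAt_log hs.ne').comp u h1; exact this
    have heq : (Real.sin (Real.exp u))⁻¹ * (Real.cos (Real.exp u) * Real.exp u)
        = Real.exp u * Real.cos (Real.exp u) / Real.sin (Real.exp u) := by
      field_simp
    rw [heq] at h2
    exact h2.hasDerivWithinAt
  · intro u hu
    rw [hint] at hu
    have hs := hmem u hu
    have hnum : HasDerivAt (fun u => Real.exp u * Real.cos (Real.exp u))
        (Real.exp u * Real.cos (Real.exp u) +
          Real.exp u * (-Real.sin (Real.exp u) * Real.exp u)) u := by
      have hc : HasDerivAt (fun u => Real.cos (Real.exp u))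
          (-Real.sin (Real.exp u) * Real.exp u) u :=
        (Real.hasDerivAt_cos (Real.exp u)).comp u (Real.hasDerivAt_exp u)
      exact (Real.hasDerivAt_exp u).mul hc
    have hden : HasDerivAt (fun u => Real.sin (Real.exp u))
        (Real.cos (Real.exp u) * Real.exp u) u :=
      (Real.hasDerivAt_sin (Real.exp u)).comp u (Real.hasDerivAt_exp u)
    have h := hnum.div hden hs.ne'
    have heq : ((Real.exp u * Real.cos (Real.exp u) +
          Real.exp u * (-Real.sin (Real.exp u) * Real.exp u)) * Real.sin (Real.exp u) -
          Real.exp u * Real.cos (Real.exp u) * (Real.cos (Real.exp u) * Real.exp u)) /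
          Real.sin (Real.exp u) ^ 2
        = Real.exp u * (Real.sin (Real.exp u) * Real.cos (Real.exp u) - Real.exp u) /
          (Real.sin (Real.exp u)) ^ 2 := by
      have hpyth := Real.sin_sq_add_cos_sq (Real.exp u)
      congr 1
      linear_combination (-(Real.exp u)^2) * hpyth
    rw [heq] at h
    exact h.hasDerivWithinAt
  · intro u hu
    rw [hint] at hu
    have hs := hmem u hu
    have hxp : (0:ℝ) < Real.exp u := Real.exp_pos u
    have hkey : Real.sin (Real.exp u) * Real.cos (Real.exp u) - Real.exp u < 0 := by
      have h2 : Real.sin (2 * Real.exp u) < 2 * Real.exp u :=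
        Real.sin_lt (by linarith)
      rw [Real.sin_two_mul] at h2
      nlinarith
    have hneg : Real.exp u * (Real.sin (Real.exp u) * Real.cos (Real.exp u) - Real.exp u) < 0 :=
      mul_neg_of_pos_of_neg hxp hkey
    exact le_of_lt (div_neg_of_neg_of_pos hneg (by positivity))

/-- Key inequality: for `a, b ∈ (0, π)`, `sin a * sin b ≤ sin (√(ab))²`. -/
lemma sin_mul_sin_le (a b : ℝ) (ha : 0 < a) (ha' : a < Real.pi)
    (hb : 0 < b) (hb' : b < Real.pi) :
    Real.sin a * Real.sin b ≤ Real.sin (Real.sqrt (a * b)) ^ 2 := by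
  have hsa : 0 < Real.sin a := Real.sin_pos_of_pos_of_lt_pi ha ha'
  have hsb : 0 < Real.sin b := Real.sin_pos_of_pos_of_lt_pi hb hb'
  have hma : Real.log a ∈ Set.Iio (Real.log Real.pi) :=
    Set.mem_Iio.2 (Real.log_lt_log ha ha')
  have hmb : Real.log b ∈ Set.Iio (Real.log Real.pi) :=
    Set.mem_Iio.2 (Real.log_lt_log hb hb')
  have hcc := concave_log_sin_exp.2 hma hmb (by norm_num : (0:ℝ) ≤ (1:ℝ)/2)
    (by norm_num : (0:ℝ) ≤ (1:ℝ)/2) (by norm_num)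
  simp only [smul_eq_mul] at hcc
  have hea : Real.exp (Real.log a) = a := Real.exp_log ha
  have heb : Real.exp (Real.log b) = b := Real.exp_log hb
  have hmid : Real.exp (1/2 * Real.log a + 1/2 * Real.log b) = Real.sqrt (a * b) := by
    have h1 : Real.log (Real.sqrt (a * b)) = 1/2 * Real.log a + 1/2 * Real.log b := by
      rw [Real.log_sqrt (by positivity), Real.log_mul ha.ne' hb.ne']
      ring
    rw [← h1, Real.exp_log (Real.sqrt_pos.2 (by positivity))]
  rw [hea, heb, hmid] at hcc
  have hss : 0 < Real.sin (Real.sqrt (a * b)) := by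
    apply Real.sin_pos_of_pos_of_lt_pi (Real.sqrt_pos.2 (by positivity))
    have : Real.sqrt (a * b) < Real.sqrt (Real.pi ^ 2) := by
      apply Real.sqrt_lt_sqrt (by positivity)
      nlinarith
    rwa [Real.sqrt_sq Real.pi_pos.le] at this
  -- exponentiate
  have hexp := Real.exp_le_exp.2 hcc
  rw [Real.exp_log hss] at hexp
  have h1 : Real.exp (1/2 * Real.log (Real.sin a) + 1/2 * Real.log (Real.sin b)) ^ 2
      = Real.sin a * Real.sin b := by
    rw [sq, ← Real.exp_add,
      show 1/2 * Real.log (Real.sin a) + 1/2 * Real.log (Real.sin b) +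
        (1/2 * Real.log (Real.sin a) + 1/2 * Real.log (Real.sin b))
        = Real.log (Real.sin a) + Real.log (Real.sin b) by ring,
      Real.exp_add, Real.exp_log hsa, Real.exp_log hsb]
  calc Real.sin a * Real.sin b
      = Real.exp (1/2 * Real.log (Real.sin a) + 1/2 * Real.log (Real.sin b)) ^ 2 := h1.symm
    _ ≤ Real.sin (Real.sqrt (a * b)) ^ 2 := by
        apply pow_le_pow_left₀ (Real.exp_nonneg _) hexp

/-- For every integer `N ≥ 1` and every real `x` with `0 < x < π/2`, one has
`sin²x ≥ sin(π/N)·sin(Nx²/π)`. -/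
theorem sin_sq_ge (N : ℕ) (hN : 1 ≤ N) (x : ℝ) (hx : 0 < x) (hx' : x < Real.pi / 2) :
    Real.sin (Real.pi / N) * Real.sin (N * x ^ 2 / Real.pi) ≤ Real.sin x ^ 2 := by
  have hpi := Real.pi_pos
  have hsx : 0 < Real.sin x := Real.sin_pos_of_pos_of_lt_pi hx (by linarith)
  rcases eq_or_lt_of_le hN with h1 | h2
  · -- N = 1
    have : (N : ℝ) = 1 := by exact_mod_cast h1.symm
    rw [this]
    simp [Real.sin_pi]
    positivity
  · -- N ≥ 2
    have hN2 : 2 ≤ N := h2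
    have hNR : (2:ℝ) ≤ (N:ℝ) := by exact_mod_cast hN2
    have hNpos : (0:ℝ) < (N:ℝ) := by linarith
    set a := Real.pi / N with ha_def
    set b := (N:ℝ) * x ^ 2 / Real.pi with hb_def
    have ha : 0 < a := by positivity
    have ha' : a < Real.pi := by
      rw [ha_def, div_lt_iff₀ hNpos]
      nlinarith
    have hb : 0 < b := by positivity
    have hab : a * b = x ^ 2 := by
      rw [ha_def, hb_def, div_mul_div_comm, div_eq_iff (by positivity)]
      ring
    by_cases hbp : b < Real.pi
    · have := sin_mul_sin_le a b ha ha' hb hbp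
      rwa [hab, Real.sqrt_sq hx.le] at this
    · -- b ≥ π : cruder bound
      push_neg at hbp
      have hx2 : Real.pi ^ 2 / N ≤ x ^ 2 := by
        rw [← hab, ha_def]
        calc Real.pi ^ 2 / N = (Real.pi / N) * Real.pi := by ring
          _ ≤ (Real.pi / N) * b := by
              apply mul_le_mul_of_nonneg_left hbp (by positivity)
      have hsa : 0 < Real.sin a := Real.sin_pos_of_pos_of_lt_pi ha ha'
      have hstep1 : Real.sin a * Real.sin b ≤ Real.sin a :=
        calc Real.sin a * Real.sin b ≤ Real.sin a * 1 :=
              mul_le_mul_of_nonneg_left (Real.sin_le_one b) hsa.le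
          _ = Real.sin a := mul_one _
      have hstep2 : Real.sin a ≤ Real.pi / N := Real.sin_le ha.le
      have hstep3 : 2 / Real.pi * x ≤ Real.sin x := Real.mul_le_sin hx.le hx'.le
      have hsin_sq : 4 / (N:ℝ) ≤ Real.sin x ^ 2 := by
        have h4 : (2 / Real.pi * x) ^ 2 ≤ Real.sin x ^ 2 :=
          pow_le_pow_left₀ (by positivity) hstep3 2
        have h5 : (2 / Real.pi * x) ^ 2 = 4 / Real.pi ^ 2 * x ^ 2 := by
          field_simp; ring
        have h6 : 4 / (N:ℝ) ≤ 4 / Real.pi ^ 2 * x ^ 2 := by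
          rw [div_le_iff₀ hNpos]
          have := hx2
          rw [div_le_iff₀ hNpos] at this
          calc (4:ℝ) = 4 / Real.pi ^ 2 * Real.pi ^ 2 := by field_simp
            _ ≤ 4 / Real.pi ^ 2 * (x ^ 2 * N) := by
                apply mul_le_mul_of_nonneg_left this (by positivity)
            _ = 4 / Real.pi ^ 2 * x ^ 2 * N := by ring
        linarith [h4, h5 ▸ h4]
      have hpi4 : Real.pi ≤ 4 := Real.pi_le_four
      have : Real.pi / N ≤ 4 / N := by gcongr
      linarith
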